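/- Let 𝒢 be a GRN with associated PRN ℛ, and let τ be an appendage node of 𝒢. Then (τ,R) and (τ,P) are path-equivalent in the appendage subnetwork of ℛ if and only if τ lies on a directed cycle of 𝒢 all of whose nodes are appendage nodes (a self-loop at τ counts as such a cycle). -/

import Mathlib

open List Relation

/- In the PRN on `V × Bool`, the node `(v, false)` is the mRNA node `v^R`
   and `(v, true)` is the protein node `v^P`. -/

/-- Arrow relation of the PRN associated to a GRN with arrow relation `E`:
arrows `(v,R) → (v,P)` for every `v`, and `(u,P) → (v,R)` whenever `E u v`. -/
def prnAdj {V : Type*} (E : V → V → Prop) : V × Bool → V × Bool → Prop :=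
  fun a b =>
    (a.1 = b.1 ∧ a.2 = false ∧ b.2 = true) ∨
    (E a.1 b.1 ∧ a.2 = true ∧ b.2 = false)

/-- The lift of a path `σ₁ → ⋯ → σ_m` in the GRN to the path
`(σ₁,R) → (σ₁,P) → ⋯ → (σ_m,R) → (σ_m,P)` in the PRN. -/
def liftPath {V : Type*} (l : List V) : List (V × Bool) :=
  l.flatMap fun v => [(v, false), (v, true)]

/-- A simple path: a nonempty directed path visiting each node at most once. -/
def IsSimplePath {V : Type*} (E : V → V → Prop) (l : List V) : Prop :=
  l ≠ [] ∧ l.Chain' E ∧ l.Nodup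

/-- A simple path from `a` to `b`. -/
def IsSimplePathFrom {V : Type*} (E : V → V → Prop) (a b : V) (l : List V) : Prop :=
  IsSimplePath E l ∧ l.head? = some a ∧ l.getLast? = some b

/-- A node is simple if it lies on some simple path from the input to the output. -/
def IsSimpleNode {V : Type*} (E : V → V → Prop) (ι o v : V) : Prop :=
  ∃ l, IsSimplePathFrom E ι o l ∧ v ∈ l

/-- A node is super-simple if it lies on every simple path from the input to the output. -/
def IsSuperSimpleNode {V : Type*} (E : V → V → Prop) (ι o v : V) : Prop :=
  ∀ l, IsSimplePathFrom E ι o l → v ∈ l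

/-- A node is appendage if it lies on no simple path from the input to the output. -/
def IsAppendageNode {V : Type*} (E : V → V → Prop) (ι o v : V) : Prop :=
  ¬ IsSimpleNode E ι o v

/-- An appendage path from `a` to `b`: a simple path from `a` to `b` each of whose
nodes, except possibly `a` and `b`, is an appendage node. -/
def IsAppendagePath {V : Type*} (E : V → V → Prop) (ι o a b : V) (l : List V) : Prop :=
  IsSimplePathFrom E a b l ∧ ∀ v ∈ l, v ≠ a → v ≠ b → IsAppendageNode E ι o v

/-- A directed cycle: a nonempty closed directed walk visiting each of its nodes
exactly once (a self-loop is a cycle of length one). -/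
def IsCycle {V : Type*} (E : V → V → Prop) (c : List V) : Prop :=
  c ≠ [] ∧ c.Chain' E ∧ c.Nodup ∧
    ∃ a b, c.head? = some a ∧ c.getLast? = some b ∧ E b a

/-- Arrow relation of the appendage subnetwork: the induced subgraph on appendage nodes. -/
def appendageAdj {V : Type*} (E : V → V → Prop) (ι o : V) : V → V → Prop :=
  fun a b => E a b ∧ IsAppendageNode E ι o a ∧ IsAppendageNode E ι o b

/-- Two appendage nodes are path-equivalent if each is reachable from the other by a
directed path lying entirely within the appendage subnetwork. -/
def PathEquiv {V : Type*} (E : V → V → Prop) (ι o a b : V) : Prop :=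
  Relation.ReflTransGen (appendageAdj E ι o) a b ∧
  Relation.ReflTransGen (appendageAdj E ι o) b a

/-- A node `x` is between `a` and `b` if some input-to-output simple path visits
`a`, `x`, `b` in that order. -/
def Between {V : Type*} (E : V → V → Prop) (ι o a x b : V) : Prop :=
  ∃ l, IsSimplePathFrom E ι o l ∧ [a, x, b].Sublist l

section Aux

variable {V : Type*} {E : V → V → Prop}

lemma liftPath_nil : liftPath ([] : List V) = [] := rfl

lemma liftPath_cons (a : V) (l : List V) :
    liftPath (a :: l) = (a, false) :: (a, true) :: liftPath l := rfl

lemma liftPath_eq_nil_iff {l : List V} : liftPath l = [] ↔ l = [] := by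
  cases l <;> simp [liftPath_cons, liftPath_nil]

lemma mem_liftPath {v : V} {b : Bool} {l : List V} : (v, b) ∈ liftPath l ↔ v ∈ l := by
  simp [liftPath, Prod.ext_iff]
  cases b <;> simp

lemma liftPath_nodup {l : List V} : (liftPath l).Nodup ↔ l.Nodup := by
  induction l with
  | nil => simp [liftPath_nil]
  | cons a t ih =>
    simp [liftPath_cons, nodup_cons, mem_liftPath, ih, Prod.ext_iff]

lemma liftPath_head? {l : List V} : (liftPath l).head? = l.head?.map (fun v => (v, false)) := by
  cases l <;> simp [liftPath_cons, liftPath_nil]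

lemma liftPath_getLast? {l : List V} :
    (liftPath l).getLast? = l.getLast?.map (fun v => (v, true)) := by
  induction l with
  | nil => simp [liftPath_nil]
  | cons a t ih =>
    cases t with
    | nil => simp [liftPath_cons, liftPath_nil]
    | cons b t' =>
      rw [liftPath_cons, show ((a, false) :: (a, true) :: liftPath (b :: t')) =
        [(a, false), (a, true)] ++ liftPath (b :: t') by simp,
        getLast?_append, getLast?_cons_cons, ih]
      rw [List.getLast?_eq_getLast (l := b :: t') (by simp)]
      simp
      rw [List.getLast?_eq_getLast (l := b :: t') (by simp)]

lemma liftPath_chain'_iff {l : List V} :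
    (liftPath l).Chain' (prnAdj E) ↔ l.Chain' E := by
  induction l with
  | nil => simp [liftPath_nil, Chain']
  | cons a t ih =>
    cases t with
    | nil => simp [liftPath_cons, liftPath_nil, Chain', isChain_cons_cons, prnAdj]
    | cons b t' =>
      rw [liftPath_cons, liftPath_cons]
      simp only [Chain'] at ih ⊢
      rw [isChain_cons_cons, isChain_cons_cons, ← liftPath_cons, ih, isChain_cons_cons]
      simp [prnAdj]

/-- structure: any prn-chain from an R-node to a P-node is a lift. -/
lemma prn_chain_structure : ∀ (n : ℕ) (L : List (V × Bool)) (a : V),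
    L.length ≤ n → L.Chain' (prnAdj E) → L.head? = some (a, false) →
    (L.getLast?.map Prod.snd) = some true → ∃ l : List V, L = liftPath l := by
  intro n
  induction n with
  | zero => intro L a hL _ hh _; cases L <;> simp_all
  | succ n ih =>
    intro L a hL hc hh hlast
    match L, hh with
    | (a, false) :: L₂, _ =>
      cases L₂ with
      | nil => simp at hlast
      | cons y L₃ =>
        have hy : y = (a, true) := by
          have := (isChain_cons_cons.mp hc).1
          rcases this with ⟨h1, h2, h3⟩ | ⟨h1, h2, h3⟩
          · cases y; simp_all
          · simp at h2
        subst hy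
        cases L₃ with
        | nil => exact ⟨[a], rfl⟩
        | cons z L₄ =>
          have hz : z.2 = false ∧ E a z.1 := by
            have := (isChain_cons_cons.mp (isChain_cons_cons.mp hc).2).1
            rcases this with ⟨h1, h2, h3⟩ | ⟨h1, h2, h3⟩
            · simp at h2
            · exact ⟨h3, h1⟩
          obtain ⟨l, hl⟩ := ih ((z.1, false) :: L₄) z.1
            (by simp at hL ⊢; omega)
            (by
              have := (isChain_cons_cons.mp (isChain_cons_cons.mp hc).2).2
              rwa [show (z.1, false) = z by rw [← hz.1]])
            rfl
            (by
              rw [show (z.1, false) = z by rw [← hz.1]]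
              rw [← hlast]
              rcases L₄.eq_nil_or_concat with rfl | ⟨l', e, rfl⟩ <;> simp)
          refine ⟨a :: l, ?_⟩
          rw [liftPath_cons, ← hl]
          rw [show (z.1, false) = z by rw [← hz.1]]

variable {ι o : V}

lemma isSimpleNode_prn_iff {v : V} {b : Bool} :
    IsSimpleNode (prnAdj E) (ι, false) (o, true) (v, b) ↔ IsSimpleNode E ι o v := by
  constructor
  · rintro ⟨L, ⟨⟨hne, hc, hnd⟩, hh, hl⟩, hmem⟩
    obtain ⟨l, rfl⟩ := prn_chain_structure L.length L ι le_rfl hc hh (by rw [hl]; rfl)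
    refine ⟨l, ⟨⟨?_, ?_, ?_⟩, ?_, ?_⟩, ?_⟩
    · simpa [liftPath_eq_nil_iff] using hne
    · exact liftPath_chain'_iff.mp hc
    · exact liftPath_nodup.mp hnd
    · rw [liftPath_head?] at hh; cases h : l.head? <;> simp [h] at hh ⊢; exact hh
    · rw [liftPath_getLast?] at hl; cases h : l.getLast? <;> simp [h] at hl ⊢; exact hl
    · exact mem_liftPath.mp hmem
  · rintro ⟨l, ⟨⟨hne, hc, hnd⟩, hh, hl⟩, hmem⟩
    refine ⟨liftPath l, ⟨⟨?_, ?_, ?_⟩, ?_, ?_⟩, ?_⟩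
    · simpa [liftPath_eq_nil_iff] using hne
    · exact liftPath_chain'_iff.mpr hc
    · exact liftPath_nodup.mpr hnd
    · rw [liftPath_head?, hh]; rfl
    · rw [liftPath_getLast?, hl]; rfl
    · exact mem_liftPath.mpr hmem

lemma isAppendageNode_prn_iff {v : V} {b : Bool} :
    IsAppendageNode (prnAdj E) (ι, false) (o, true) (v, b) ↔ IsAppendageNode E ι o v :=
  not_congr isSimpleNode_prn_iff

/-- Projection of appendage walks in the PRN to the GRN. -/
lemma prn_proj {a b : V × Bool}
    (h : ReflTransGen (appendageAdj (prnAdj E) (ι, false) (o, true)) a b) :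
    ReflTransGen (appendageAdj E ι o) a.1 b.1 ∧
      (a.2 = true → b.2 = false → TransGen (appendageAdj E ι o) a.1 b.1) := by
  induction h with
  | refl => exact ⟨ReflTransGen.refl, by simp_all⟩
  | tail _ e ih =>
    obtain ⟨he, ha, hb⟩ := e
    rcases he with ⟨h1, h2, h3⟩ | ⟨h1, h2, h3⟩
    · exact ⟨h1 ▸ ih.1, by simp [h3]⟩
    · have hedge : appendageAdj E ι o _ _ := ⟨h1,
        isAppendageNode_prn_iff.mp (by rwa [Prod.mk.eta]),
        isAppendageNode_prn_iff.mp (by rwa [Prod.mk.eta])⟩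
      exact ⟨ih.1.tail hedge, fun _ _ => TransGen.tail' ih.1 hedge⟩

/-- Lifting appendage walks in the GRN to the PRN. -/
lemma lift_walk {u v : V} (h : ReflTransGen (appendageAdj E ι o) u v) :
    ReflTransGen (appendageAdj (prnAdj E) (ι, false) (o, true)) (u, true) (v, true) := by
  induction h with
  | refl => exact ReflTransGen.refl
  | @tail b c _ e ih =>
    have s1 : appendageAdj (prnAdj E) (ι, false) (o, true) (b, true) (c, false) :=
      ⟨Or.inr ⟨e.1, rfl, rfl⟩, isAppendageNode_prn_iff.mpr e.2.1,
        isAppendageNode_prn_iff.mpr e.2.2⟩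
    have s2 : appendageAdj (prnAdj E) (ι, false) (o, true) (c, false) (c, true) :=
      ⟨Or.inl ⟨rfl, rfl, rfl⟩, isAppendageNode_prn_iff.mpr e.2.2,
        isAppendageNode_prn_iff.mpr e.2.2⟩
    exact (ih.tail s1).tail s2

lemma not_nodup_split {l : List V} (h : ¬ l.Nodup) :
    ∃ (p : List V) (x : V) (q r : List V), l = p ++ x :: q ++ x :: r := by
  induction l with
  | nil => simp at h
  | cons a t ih =>
    rw [nodup_cons] at h
    push_neg at h
    by_cases ha : a ∈ t
    · obtain ⟨q, r, rfl⟩ := List.append_of_mem ha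
      exact ⟨[], a, q, r, rfl⟩
    · obtain ⟨p, x, q, r, rfl⟩ := ih (h ha)
      exact ⟨a :: p, x, q, r, rfl⟩

lemma chain'_cut {R : V → V → Prop} {p q r : List V} {x : V}
    (h : List.Chain' R (p ++ (x :: (q ++ (x :: r))))) :
    List.Chain' R (p ++ (x :: r)) := by
  simp only [Chain'] at h ⊢
  rw [isChain_append] at h ⊢
  obtain ⟨h1, h2, h3⟩ := h
  refine ⟨h1, ?_, ?_⟩
  · have : List.Chain' R ((x :: q) ++ (x :: r)) := by simpa [Chain'] using h2
    exact (isChain_append.mp this).2.1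
  · intro y hy z hz
    exact h3 y hy z (by simp_all)

lemma head?_cut (p r s : List V) (x : V) :
    (p ++ x :: r).head? = (p ++ x :: s).head? := by
  cases p <;> simp

/-- Extract a cycle through τ from a closed walk at τ. -/
lemma closed_walk_cycle {P : V → Prop} {τ : V} : ∀ (n : ℕ) (f : List V),
    f.length ≤ n → 2 ≤ f.length → f.head? = some τ → f.Chain' E →
    f.getLast? = some τ → (∀ v ∈ f, P v) →
    ∃ c, IsCycle E c ∧ τ ∈ c ∧ ∀ v ∈ c, P v := by
  intro n
  induction n with
  | zero => intro f h1 h2; omega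
  | succ n ih =>
    intro f hlen h2 hh hc hlast hP
    have hfne : f ≠ [] := by rintro rfl; simp at h2
    have hfl : f.getLast hfne = τ := by
      rw [List.getLast?_eq_getLast (l := f) hfne] at hlast; simpa using hlast
    have hsplit : f.dropLast ++ [τ] = f := by
      conv_rhs => rw [← List.dropLast_append_getLast hfne, hfl]
    by_cases hnd : f.dropLast.Nodup
    · have hcne : f.dropLast ≠ [] := by
        have := f.length_dropLast
        intro h; rw [h] at this; simp at this; omega
      have hch : f.dropLast.head? = some τ := by
        rw [← hh]
        conv_rhs => rw [← hsplit]
        rw [List.head?_append_of_ne_nil _ hcne]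
      have hlink : E (f.dropLast.getLast hcne) τ := by
        have := isChain_append.mp (by rwa [← hsplit] at hc)
        exact this.2.2 _ (List.getLast?_eq_getLast hcne ▸ rfl) τ rfl
      refine ⟨f.dropLast, ⟨hcne, hc.prefix f.dropLast_prefix, hnd,
        τ, f.dropLast.getLast hcne, hch, List.getLast?_eq_getLast hcne, hlink⟩,
        List.mem_of_mem_head? (by rw [hch]; rfl), ?_⟩
      intro v hv
      exact hP v (f.dropLast_sublist.mem hv)
    · obtain ⟨p, x, q, r, hd⟩ := not_nodup_split hnd
      have hf : f = p ++ (x :: (q ++ (x :: (r ++ [τ])))) := by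
        rw [← hsplit, hd]; simp
      refine ih (p ++ (x :: (r ++ [τ]))) ?_ ?_ ?_ ?_ ?_ ?_
      · have : f.length = (p ++ (x :: (q ++ (x :: (r ++ [τ]))))).length := by rw [hf]
        simp at this hlen ⊢; omega
      · simp; omega
      · rw [← hh, hf]; exact head?_cut p (r ++ [τ]) (q ++ (x :: (r ++ [τ]))) x
      · exact chain'_cut (by rwa [hf] at hc)
      · rw [show p ++ (x :: (r ++ [τ])) = (p ++ (x :: r)) ++ [τ] by simp]
        exact List.getLast?_concat
      · intro v hv
        apply hP
        rw [hf]
        simp at hv ⊢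
        tauto

lemma rtg_of_chain' {R : V → V → Prop} {l : List V} {x y : V}
    (hc : List.Chain' R l) (hh : l.head? = some x) (hl : l.getLast? = some y) :
    ReflTransGen R x y := by
  cases l with
  | nil => simp at hh
  | cons a t =>
    have ha : a = x := by simpa using hh
    subst ha
    refine List.relationReflTransGen_of_exists_isChain_cons t hc ?_
    rw [List.getLast?_eq_getLast (by simp)] at hl
    simpa using hl

lemma chain_targets {R : V → V → Prop} {l : List V} :
    ∀ {a : V}, List.Chain R a l → ∀ v ∈ l, ∃ u, R u v := by
  induction l with
  | nil => simp
  | cons b t ih =>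
    intro a h v hv
    replace h : R a b ∧ Chain R b t := isChain_cons_cons.mp h
    rcases List.mem_cons.mp hv with rfl | hv
    · exact ⟨a, h.1⟩
    · exact ih h.2 v hv

/-- From a nontrivial appendage closed walk at τ, extract an appendage cycle. -/
lemma chain'_mem_imp {R S : V → V → Prop} : ∀ {l : List V},
    (∀ a ∈ l, ∀ b ∈ l, R a b → S a b) → l.Chain' R → l.Chain' S := by
  intro l
  induction l with
  | nil => simp [Chain']
  | cons a t ih =>
    intro h hc
    simp only [Chain'] at hc ⊢
    rw [List.isChain_cons] at hc ⊢
    refine ⟨fun y hy => h a (by simp) y (List.mem_cons_of_mem a (List.mem_of_mem_head? hy)) (hc.1 y hy), ?_⟩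
    exact ih (fun x hx y hy => h x (List.mem_cons_of_mem a hx) y (List.mem_cons_of_mem a hy)) hc.2

lemma cycle_of_transGen {τ : V} (hτ : IsAppendageNode E ι o τ)
    (h : TransGen (appendageAdj E ι o) τ τ) :
    ∃ c, IsCycle E c ∧ τ ∈ c ∧ ∀ v ∈ c, IsAppendageNode E ι o v := by
  obtain ⟨b, hrtg, hba⟩ := Relation.TransGen.tail'_iff.mp h
  obtain ⟨l, hchain, hgl⟩ := List.exists_isChain_cons_of_relationReflTransGen hrtg
  set A := appendageAdj E ι o
  have hA : List.Chain' A ((τ :: l) ++ [τ]) := by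
    simp only [Chain']
    rw [isChain_append]
    refine ⟨hchain, by simp, ?_⟩
    intro y hy z hz
    rw [List.getLast?_eq_getLast (by simp), hgl] at hy
    simp at hy hz
    rwa [← hy, ← hz]
  refine closed_walk_cycle ((τ :: l) ++ [τ]).length ((τ :: l) ++ [τ]) le_rfl
    (by simp) (by simp) (hA.imp fun a b hab => hab.1)
    (List.getLast?_concat) ?_
  intro v hv
  simp at hv
  rcases hv with rfl | hv | rfl
  · exact hτ
  · obtain ⟨u, hu⟩ := chain_targets hchain v hv
    exact hu.2.2
  · exact hτ

/-- From an appendage cycle through τ, get a nontrivial appendage closed walk at τ. -/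
lemma transGen_of_cycle {τ : V} {c : List V} (hc : IsCycle E c) (hτ : τ ∈ c)
    (happ : ∀ v ∈ c, IsAppendageNode E ι o v) :
    TransGen (appendageAdj E ι o) τ τ := by
  obtain ⟨hne, hch, hnd, a, b, hh, hl, hE⟩ := hc
  set A := appendageAdj E ι o
  -- upgrade the chain to the appendage subnetwork
  have hchA : List.Chain' A c := chain'_mem_imp (fun a ha b hb hab => ⟨hab, happ a ha, happ b hb⟩) hch
  obtain ⟨p, q, rfl⟩ := List.append_of_mem hτ
  have hqne : (τ :: q) ≠ [] := by simp
  -- from τ to the last node b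
  have h1 : ReflTransGen A τ b := by
    refine rtg_of_chain' (hchA.suffix ⟨p, rfl⟩) rfl ?_
    rw [← hl, List.getLast?_append]
    rw [List.getLast?_eq_getLast hqne]
    rfl
  -- edge from b to the head a
  have h2 : A b a := by
    refine ⟨hE, ?_, ?_⟩
    · exact happ _ (List.mem_of_mem_getLast? (by rw [hl]; rfl))
    · exact happ _ (List.mem_of_mem_head? (by rw [hh]; rfl))
  -- from a back to τ
  have h3 : ReflTransGen A a τ := by
    refine rtg_of_chain' (hchA.prefix (⟨q, by simp⟩ : (p ++ [τ]) <+: p ++ τ :: q)) ?_ ?_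
    · rw [← hh, ← List.head?_append_of_ne_nil (p ++ [τ]) (l₂ := q) (by simp)]
      simp
    · exact List.getLast?_concat
  exact (TransGen.tail' h1 h2).trans_left h3

end Aux

/-- For an appendage node `τ` of the GRN, `(τ,R)` and `(τ,P)` are
path-equivalent in the appendage subnetwork of the PRN if and only if `τ` lies on a
directed cycle of the GRN all of whose nodes are appendage nodes (a self-loop at `τ`
counts as such a cycle). -/
theorem stmt_14 {V : Type*} [Fintype V] (E : V → V → Prop) (ι o τ : V)
    (hτ : IsAppendageNode E ι o τ) :
    PathEquiv (prnAdj E) (ι, false) (o, true) (τ, false) (τ, true) ↔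
      (∃ c : List V, IsCycle E c ∧ τ ∈ c ∧ ∀ v ∈ c, IsAppendageNode E ι o v) := by
  constructor
  · rintro ⟨_, h2⟩
    exact cycle_of_transGen hτ ((prn_proj h2).2 rfl rfl)
  · rintro ⟨c, hc, hmem, happ⟩
    have tg := transGen_of_cycle hc hmem happ
    constructor
    · exact ReflTransGen.single ⟨Or.inl ⟨rfl, rfl, rfl⟩,
        isAppendageNode_prn_iff.mpr hτ, isAppendageNode_prn_iff.mpr hτ⟩
    · obtain ⟨w, hrtg, e⟩ := Relation.TransGen.tail'_iff.mp tg
      exact (lift_walk hrtg).tail ⟨Or.inr ⟨e.1, rfl, rfl⟩,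
        isAppendageNode_prn_iff.mpr e.2.1, isAppendageNode_prn_iff.mpr e.2.2⟩
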